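/- Let q = 2^(2m+1) with m ≥ 1 and W the group on GF(q) × GF(q) with operation (a,b)·(c,d) = (a+c, b+d+π(a)c), π(x) = x^(2^(m+1)). Then every nontrivial element of W has order 2 or 4; in particular W has exponent 4 and contains exactly q^2 − q elements of order 4. -/
import Mathlib


/-- Let `q = 2^(2m+1)`, `m ≥ 1`, `F = GF(q)`, and let `W` be the group on `F × F` with
multiplication `(a,b)·(c,d) = (a+c, b+d+π(a)c)`, where `π(x) = x^(2^(m+1))`.
Then every nontrivial element of `W` has order `2` or `4`; in particular `W` has
exponent `4` and contains exactly `q^2 - q` elements of order `4`. -/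
theorem stmt_6 (m : ℕ) (hm : 1 ≤ m) (F : Type*) [Field F] [Fintype F]
    (hF : Fintype.card F = 2 ^ (2 * m + 1))
    (W : Type*) [Group W] [Fintype W] (e : W ≃ F × F)
    (he : ∀ x y : W, e (x * y) =
      ((e x).1 + (e y).1, (e x).2 + (e y).2 + (e x).1 ^ (2 ^ (m + 1)) * (e y).1)) :
    (∀ x : W, x ≠ 1 → orderOf x = 2 ∨ orderOf x = 4) ∧
      Monoid.exponent W = 4 ∧
      Nat.card {x : W | orderOf x = 4} = (2 ^ (2 * m + 1)) ^ 2 - 2 ^ (2 * m + 1) := by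
  classical
  -- characteristic 2
  obtain ⟨p, hp⟩ := CharP.exists F
  obtain ⟨n, hpp, hcard⟩ := FiniteField.card F p
  have hp2 : p = 2 := by
    have h1 : p ∣ 2 ^ (2 * m + 1) := hF ▸ hcard ▸ dvd_pow_self p n.pos.ne'
    exact (Nat.prime_dvd_prime_iff_eq hpp Nat.prime_two).mp (hpp.dvd_of_dvd_pow h1)
  subst hp2
  haveI := hp
  have char2 : ∀ a : F, a + a = 0 := fun a => CharTwo.add_self_eq_zero a
  -- e 1 = 0
  have he1 : e 1 = (0, 0) := by
    have h := he 1 1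
    rw [mul_one] at h
    have h1 : (e 1).1 = 0 :=
      (congrArg Prod.fst h).trans (char2 _)
    have h2 : (e 1).2 = 0 := by
      have h3 : (e 1).2 = (e 1).2 + (e 1).2 + (e 1).1 ^ 2 ^ (m + 1) * (e 1).1 :=
        congrArg Prod.snd h
      rw [h1, mul_zero, add_zero] at h3
      exact h3.trans (char2 _)
    exact Prod.ext h1 h2
  -- square formula
  have hsq : ∀ x : W, e (x ^ 2) = (0, (e x).1 ^ (2 ^ (m + 1) + 1)) := fun x => by
    rw [pow_two, he x x]
    refine Prod.ext (char2 _) ?_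
    show (e x).2 + (e x).2 + (e x).1 ^ 2 ^ (m + 1) * (e x).1
        = (e x).1 ^ (2 ^ (m + 1) + 1)
    rw [char2, zero_add]
    exact (pow_succ (e x).1 (2 ^ (m + 1))).symm
  -- fourth power = 1
  have hx4 : ∀ x : W, x ^ 4 = 1 := fun x => by
    apply e.injective
    have h4 : x ^ 4 = (x ^ 2) ^ 2 := by rw [← pow_mul]
    rw [h4, hsq, hsq, he1]
    show ((0 : F), (0:F) ^ (2 ^ (m + 1) + 1)) = ((0:F), (0:F))
    rw [zero_pow (Nat.succ_ne_zero _)]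
  have hdvd4 : ∀ x : W, orderOf x ∣ 4 := fun x => orderOf_dvd_of_pow_eq_one (hx4 x)
  -- x ^ 2 = 1 ↔ (e x).1 = 0
  have hsq1 : ∀ x : W, x ^ 2 = 1 ↔ (e x).1 = 0 := fun x => by
    constructor
    · intro h
      have h5 := hsq x
      rw [h, he1] at h5
      have h2 : (0 : F) = (e x).1 ^ (2 ^ (m + 1) + 1) := congrArg Prod.snd h5
      exact pow_eq_zero_iff (Nat.succ_ne_zero _) |>.mp h2.symm
    · intro h
      apply e.injective
      rw [hsq, he1, h, zero_pow (Nat.succ_ne_zero _)]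
  -- order characterization
  have horder : ∀ x : W, orderOf x = 4 ↔ (e x).1 ≠ 0 := fun x => by
    constructor
    · intro h hne
      have hx2 : x ^ 2 = 1 := (hsq1 x).mpr hne
      have hd := orderOf_dvd_of_pow_eq_one hx2
      rw [h] at hd
      exact absurd hd (by norm_num)
    · intro h
      have h2 : ¬ x ^ 2 = 1 := fun hc => h ((hsq1 x).mp hc)
      obtain ⟨i, hi, ho⟩ := (Nat.dvd_prime_pow Nat.prime_two).mp
        (show orderOf x ∣ 2 ^ 2 from (by norm_num : (4:ℕ) = 2 ^ 2) ▸ hdvd4 x)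
      interval_cases i
      · exact absurd (by
          have hx1 : x = 1 := orderOf_eq_one_iff.mp (by simpa using ho)
          rw [hx1, one_pow]) h2
      · exact absurd (by
          have hp1 := pow_orderOf_eq_one x
          rwa [ho, pow_one] at hp1) h2
      · norm_num at ho; exact ho
  -- part 1
  have part1 : ∀ x : W, x ≠ 1 → orderOf x = 2 ∨ orderOf x = 4 := by
    intro x hx
    by_cases h : (e x).1 = 0
    · left
      have hx2 : x ^ 2 = 1 := (hsq1 x).mpr h
      have hd := orderOf_dvd_of_pow_eq_one hx2
      rcases (Nat.dvd_prime Nat.prime_two).mp hd with h1 | h1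
      · exact absurd (orderOf_eq_one_iff.mp h1) hx
      · exact h1
    · right; exact (horder x).mpr h
  -- an element of order 4 exists
  have hcard1 : 1 < Fintype.card F := by
    rw [hF]; exact Nat.one_lt_two_pow_iff.mpr (by omega)
  obtain ⟨a, ha⟩ := Fintype.exists_ne_of_one_lt_card hcard1 (0 : F)
  have hx4ord : orderOf (e.symm (a, (0:F))) = 4 := by
    rw [horder]; simp [ha]
  refine ⟨part1, ?_, ?_⟩
  · -- exponent
    apply Nat.dvd_antisymm
    · exact Monoid.exponent_dvd_of_forall_pow_eq_one hx4
    · rw [← hx4ord]; exact Monoid.order_dvd_exponent _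
  · -- count
    have key : Nat.card {x : W | orderOf x = 4} = Nat.card ({a : F // a ≠ 0} × F) :=
      Nat.card_congr (((e.subtypeEquiv (fun x => horder x)).trans
        Equiv.prodSubtypeFstEquivSubtypeProd))
    rw [key, Nat.card_prod, Nat.card_eq_fintype_card, Nat.card_eq_fintype_card]
    have hne : Fintype.card {a : F // a ≠ 0} = Fintype.card F - 1 := by
      have hc := Fintype.card_subtype_compl (fun a : F => a = 0)
      rw [Fintype.card_subtype_eq] at hc
      convert hc using 2
    rw [hne, hF, Nat.sub_mul, one_mul, pow_two]
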